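/- Let A ∈ GL(m, ℤ) such that no ratio of eigenvalues of A is a root of unity, and let χ_A be irreducible over ℚ. Then for every k ∈ ℕ and every subspace V ⊆ ℚ^m invariant under A^k, one has V = {0} or V = ℚ^m. -/

import Mathlib

open Polynomial Matrix

/-- powers of a matrix on an eigenvector -/
lemma aux_pow_eigen {m : ℕ} (M : Matrix (Fin m) (Fin m) ℂ) (v : Fin m → ℂ) (μ : ℂ)
    (h : M.mulVec v = μ • v) (n : ℕ) : (M ^ n).mulVec v = μ ^ n • v := by
  induction n with
  | zero => simp [Matrix.one_mulVec]
  | succ n ih =>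
      rw [pow_succ, ← Matrix.mulVec_mulVec, h, Matrix.mulVec_smul, ih, smul_smul, pow_succ]
      ring_nf

/-- polynomials of a matrix on an eigenvector -/
lemma aux_aeval_eigen {m : ℕ} (M : Matrix (Fin m) (Fin m) ℂ) (v : Fin m → ℂ) (μ : ℂ)
    (h : M.mulVec v = μ • v) (p : ℂ[X]) : (aeval M p).mulVec v = p.eval μ • v := by
  induction p using Polynomial.induction_on' with
  | add p q hp hq => rw [map_add, Matrix.add_mulVec, hp, hq, eval_add, add_smul]
  | monomial n a =>
      rw [aeval_monomial, eval_monomial, ← Algebra.smul_def, Matrix.smul_mulVec,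
        aux_pow_eigen M v μ h n, smul_smul]

/-- root of charpoly gives eigenvector over ℂ -/
lemma aux_exists_eigen {m : ℕ} (M : Matrix (Fin m) (Fin m) ℂ) (μ : ℂ)
    (h : μ ∈ M.charpoly.roots) : ∃ v : Fin m → ℂ, v ≠ 0 ∧ M.mulVec v = μ • v := by
  have hroot : M.charpoly.eval μ = 0 := by
    have := Polynomial.isRoot_of_mem_roots h
    exact this
  have hdet : (scalar (Fin m) μ - M).det = 0 := by
    have : M.charpoly.eval μ = (scalar (Fin m) μ - M).det := by
      rw [Matrix.charpoly, _root_.eval_det, matPolyEquiv_charmatrix]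
      simp [eval_sub]
    rw [this] at hroot; exact hroot
  obtain ⟨v, hv0, hv⟩ := Matrix.exists_mulVec_eq_zero_iff.mpr hdet
  refine ⟨v, hv0, ?_⟩
  rw [Matrix.sub_mulVec] at hv
  have hs : (scalar (Fin m) μ).mulVec v = μ • v := by
    ext i
    simp [Matrix.scalar, Matrix.mulVec_diagonal]
  rw [hs, sub_eq_zero] at hv
  exact hv.symm

/-- aeval commutes with mapping matrices along `ℚ → ℂ` -/
lemma aux_aeval_map {m : ℕ} (M : Matrix (Fin m) (Fin m) ℚ) (p : ℚ[X]) :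
    aeval (M.map (algebraMap ℚ ℂ)) (p.map (algebraMap ℚ ℂ)) = (aeval M p).map (algebraMap ℚ ℂ) := by
  let φ : Matrix (Fin m) (Fin m) ℚ →+* Matrix (Fin m) (Fin m) ℂ :=
    (algebraMap ℚ ℂ : ℚ →+* ℂ).mapMatrix
  have h1 : (aeval M p).map (algebraMap ℚ ℂ) = φ (aeval M p) := rfl
  have h2 : M.map (algebraMap ℚ ℂ) = φ M := rfl
  rw [h1, h2, aeval_def, aeval_def, Polynomial.hom_eval₂, Polynomial.eval₂_map]
  congr 1
  apply Subsingleton.elim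

lemma aux_deg_minpoly (m : ℕ) (A : Matrix (Fin m) (Fin m) ℤ)
    (hratio : ∀ lam mu : ℂ,
      lam ∈ (A.charpoly.map (Int.castRingHom ℂ)).roots →
      mu ∈ (A.charpoly.map (Int.castRingHom ℂ)).roots → lam ≠ mu →
      ∀ n : ℕ, 0 < n → (lam / mu) ^ n ≠ 1)
    (hirr : Irreducible (A.charpoly.map (Int.castRingHom ℚ)))
    (k : ℕ) (hk : 0 < k) :
    (minpoly ℚ ((A.map (Int.castRingHom ℚ)) ^ k)).natDegree = m := by
  set B : Matrix (Fin m) (Fin m) ℚ := A.map (Int.castRingHom ℚ) with hB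
  set C : Matrix (Fin m) (Fin m) ℚ := B ^ k with hC
  have hCint : IsIntegral ℚ C := ⟨C.charpoly, C.charpoly_monic, C.aeval_self_charpoly⟩
  have hmono : (minpoly ℚ C).Monic := minpoly.monic hCint
  -- upper bound
  have hupper : (minpoly ℚ C).natDegree ≤ m := by
    have h1 := Polynomial.natDegree_le_of_dvd (Matrix.minpoly_dvd_charpoly C)
      C.charpoly_monic.ne_zero
    rwa [Matrix.charpoly_natDegree_eq_dim, Fintype.card_fin] at h1
  -- complex charpoly of A
  have hcast : (Int.castRingHom ℂ) = (algebraMap ℚ ℂ).comp (Int.castRingHom ℚ) :=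
    Subsingleton.elim _ _
  have hχmap : A.charpoly.map (Int.castRingHom ℂ)
      = (A.charpoly.map (Int.castRingHom ℚ)).map (algebraMap ℚ ℂ) := by
    rw [Polynomial.map_map, ← hcast]
  set χℂ : ℂ[X] := A.charpoly.map (Int.castRingHom ℂ) with hχℂ
  have hχℂdeg : χℂ.natDegree = m := by
    rw [hχℂ, (A.charpoly_monic).natDegree_map, Matrix.charpoly_natDegree_eq_dim,
      Fintype.card_fin]
  have hχℂ0 : χℂ ≠ 0 := ((A.charpoly_monic).map _).ne_zero
  have hcard : Multiset.card χℂ.roots = m := by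
    rw [← hχℂdeg]
    exact (Polynomial.splits_iff_card_roots).mp (IsAlgClosed.splits χℂ)
  have hnodup : χℂ.roots.Nodup := by
    apply Polynomial.nodup_roots
    rw [hχmap]
    exact ((hirr.separable).map)
  -- the k-th powers of the roots are distinct
  have hinj : ∀ x ∈ χℂ.roots, ∀ y ∈ χℂ.roots, x ^ k = y ^ k → x = y := by
    intro x hx y hy hxy
    by_contra hne
    rcases eq_or_ne y 0 with rfl | hy0
    · rw [zero_pow hk.ne'] at hxy
      exact hne (pow_eq_zero_iff hk.ne' |>.mp hxy)
    · have : (x / y) ^ k = 1 := by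
        rw [div_pow, hxy, div_self (pow_ne_zero _ hy0)]
      exact hratio x y hx hy hne k hk this
  set T : Multiset ℂ := χℂ.roots.map (· ^ k) with hT
  have hTnodup : T.Nodup := Multiset.Nodup.map_on hinj hnodup
  -- each element of T is a root of the mapped minpoly
  set q : ℂ[X] := (minpoly ℚ C).map (algebraMap ℚ ℂ) with hq
  have hq0 : q ≠ 0 := (hmono.map _).ne_zero
  have hroots : ∀ t ∈ T, t ∈ q.roots := by
    intro t ht
    rw [hT, Multiset.mem_map] at ht
    obtain ⟨α, hα, rfl⟩ := ht
    -- eigenvector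
    have hch : (A.map (Int.castRingHom ℂ)).charpoly = χℂ := by
      rw [hχℂ, Matrix.charpoly_map]
    obtain ⟨v, hv0, hv⟩ := aux_exists_eigen (A.map (Int.castRingHom ℂ)) α (by rw [hch]; exact hα)
    have hCℂ : C.map (algebraMap ℚ ℂ) = (A.map (Int.castRingHom ℂ)) ^ k := by
      have h1 : C.map (algebraMap ℚ ℂ)
          = ((algebraMap ℚ ℂ : ℚ →+* ℂ).mapMatrix) (B ^ k) := rfl
      rw [h1, map_pow]
      congr 1
    have heig : (C.map (algebraMap ℚ ℂ)).mulVec v = α ^ k • v := by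
      rw [hCℂ]; exact aux_pow_eigen _ v α hv k
    have haeval : aeval (C.map (algebraMap ℚ ℂ)) q = 0 := by
      rw [hq, aux_aeval_map, minpoly.aeval, Matrix.map_zero _ (map_zero _)]
    have := aux_aeval_eigen (C.map (algebraMap ℚ ℂ)) v (α ^ k) heig q
    rw [haeval, Matrix.zero_mulVec] at this
    have heval : q.eval (α ^ k) = 0 := by
      rcases smul_eq_zero.mp this.symm with h | h
      · exact h
      · exact absurd h hv0
    rw [Polynomial.mem_roots hq0]
    exact heval
  have hle : T ≤ q.roots := (Multiset.le_iff_subset hTnodup).mpr hroots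
  have hlower : m ≤ (minpoly ℚ C).natDegree := by
    have h1 : Multiset.card T = m := by rw [hT, Multiset.card_map, hcard]
    have h2 := Multiset.card_le_card hle
    have h3 := Polynomial.card_roots' q
    have h4 : q.natDegree = (minpoly ℚ C).natDegree := hmono.natDegree_map _
    omega
  omega

/-- Let `A ∈ GL(m, ℤ)` such that no ratio of (distinct) complex eigenvalues of `A`
is a root of unity and `χ_A` is irreducible over `ℚ`. Then for every `k ≥ 1`,
every subspace of `ℚ^m` invariant under `A^k` is `{0}` or `ℚ^m`. -/
theorem stmt_17 (m : ℕ) (A : Matrix (Fin m) (Fin m) ℤ) (hA : IsUnit A)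
    (hratio : ∀ lam mu : ℂ,
      lam ∈ (A.charpoly.map (Int.castRingHom ℂ)).roots →
      mu ∈ (A.charpoly.map (Int.castRingHom ℂ)).roots → lam ≠ mu →
      ∀ n : ℕ, 0 < n → (lam / mu) ^ n ≠ 1)
    (hirr : Irreducible (A.charpoly.map (Int.castRingHom ℚ))) :
    ∀ k : ℕ, 0 < k → ∀ V : Submodule ℚ (Fin m → ℚ),
      (∀ v ∈ V, ((A ^ k).map (fun z : ℤ => (z : ℚ))).mulVec v ∈ V) →
      V = ⊥ ∨ V = ⊤ := by
  intro k hk V hV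
  set B : Matrix (Fin m) (Fin m) ℚ := A.map (Int.castRingHom ℚ) with hB
  set C : Matrix (Fin m) (Fin m) ℚ := B ^ k with hC
  have hBmap : (A ^ k).map (fun z : ℤ => (z : ℚ)) = C := by
    show ((Int.castRingHom ℚ).mapMatrix (A ^ k)) = C
    rw [map_pow]
    rfl
  rw [hBmap] at hV
  have hdegC : (minpoly ℚ C).natDegree = m := aux_deg_minpoly m A hratio hirr k hk
  have hdegB : (minpoly ℚ B).natDegree = m := by
    have := aux_deg_minpoly m A hratio hirr 1 one_pos
    rwa [pow_one] at this
  have hBint : IsIntegral ℚ B := ⟨B.charpoly, B.charpoly_monic, B.aeval_self_charpoly⟩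
  -- B lies in the span of powers of C
  have hBC : B ∈ Submodule.span ℚ (Set.range fun i : Fin (minpoly ℚ C).natDegree => C ^ (i : ℕ)) := by
    have hCle : Submodule.span ℚ (Set.range fun i : Fin (minpoly ℚ C).natDegree => C ^ (i : ℕ))
        ≤ Submodule.span ℚ (Set.range fun i : Fin (minpoly ℚ B).natDegree => B ^ (i : ℕ)) := by
      rw [Submodule.span_le]
      rintro _ ⟨i, rfl⟩
      exact hBint.mem_span_pow ⟨X ^ (k * (i : ℕ)), by
        show (B ^ k) ^ (i : ℕ) = _
        rw [← pow_mul, map_pow, aeval_X]⟩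
    have heq : Submodule.span ℚ (Set.range fun i : Fin (minpoly ℚ C).natDegree => C ^ (i : ℕ))
        = Submodule.span ℚ (Set.range fun i : Fin (minpoly ℚ B).natDegree => B ^ (i : ℕ)) := by
      apply Submodule.eq_of_le_of_finrank_le hCle
      rw [finrank_span_eq_card (linearIndependent_pow B),
        finrank_span_eq_card (linearIndependent_pow C), Fintype.card_fin, Fintype.card_fin,
        hdegB, hdegC]
    rw [heq]
    exact hBint.mem_span_pow ⟨X, by rw [aeval_X]⟩
  -- V is invariant under B
  have hVB : ∀ v ∈ V, B.mulVec v ∈ V := by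
    intro v hv
    have hCpow : ∀ n : ℕ, ∀ w ∈ V, (C ^ n).mulVec w ∈ V := by
      intro n
      induction n with
      | zero => intro w hw; simpa [Matrix.one_mulVec] using hw
      | succ n ih =>
          intro w hw
          have : (C ^ (n + 1)).mulVec w = (C ^ n).mulVec (C.mulVec w) := by
            rw [Matrix.mulVec_mulVec, ← pow_succ]
          rw [this]
          exact ih _ (hV w hw)
    refine Submodule.span_induction (p := fun M _ => M.mulVec v ∈ V) ?_ ?_ ?_ ?_ hBC
    · rintro _ ⟨i, rfl⟩
      exact hCpow _ v hv
    · show (0 : Matrix (Fin m) (Fin m) ℚ).mulVec v ∈ V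
      rw [Matrix.zero_mulVec]; exact V.zero_mem
    · intro x y _ _ hx hy
      show (x + y).mulVec v ∈ V
      rw [Matrix.add_mulVec]; exact V.add_mem hx hy
    · intro a x _ hx
      show (a • x).mulVec v ∈ V
      rw [Matrix.smul_mulVec]; exact V.smul_mem a hx
  -- conclude
  rcases eq_or_ne V ⊥ with h | h
  · exact Or.inl h
  right
  obtain ⟨v, hvV, hv0⟩ := (Submodule.ne_bot_iff V).mp h
  -- the vectors B^i v are linearly independent
  have hindep : LinearIndependent ℚ fun i : Fin m => (B ^ (i : ℕ)).mulVec v := by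
    rw [Fintype.linearIndependent_iff]
    intro c hc
    classical
    set p : ℚ[X] := ∑ i : Fin m, Polynomial.C (c i) * X ^ (i : ℕ) with hp
    set L : Matrix (Fin m) (Fin m) ℚ →ₗ[ℚ] (Fin m → ℚ) :=
      { toFun := fun M => M.mulVec v
        map_add' := fun M N => Matrix.add_mulVec M N v
        map_smul' := fun a M => Matrix.smul_mulVec a M v } with hL
    have hIdeal : ∀ r : ℚ[X], L (aeval B r) = 0 → ∀ s : ℚ[X], L (aeval B (r * s)) = 0 := by
      intro r hr s
      have : aeval B (r * s) = aeval B s * aeval B r := by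
        rw [mul_comm r s, _root_.map_mul]
      rw [this]
      show (aeval B s * aeval B r).mulVec v = 0
      rw [← Matrix.mulVec_mulVec]
      have hr' : (aeval B r).mulVec v = 0 := hr
      rw [hr', Matrix.mulVec_zero]
    have hpv : L (aeval B p) = 0 := by
      have h1 : aeval B p = ∑ i : Fin m, c i • B ^ (i : ℕ) := by
        rw [hp, map_sum]
        refine Finset.sum_congr rfl fun i _ => ?_
        rw [_root_.map_mul, aeval_C, map_pow, aeval_X, ← Algebra.smul_def]
      rw [h1, map_sum]
      simpa [hL] using hc
    have hχv : L (aeval B B.charpoly) = 0 := by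
      rw [B.aeval_self_charpoly, map_zero]
    have hp0 : p = 0 := by
      by_contra hp0
      have hdegp : p.degree < (m : ℕ) := degree_sum_fin_lt c
      set d : ℚ[X] := EuclideanDomain.gcd p B.charpoly with hd
      have hdv : L (aeval B d) = 0 := by
        rw [hd, EuclideanDomain.gcd_eq_gcd_ab p B.charpoly, map_add, map_add]
        rw [hIdeal p hpv _, hIdeal B.charpoly hχv _, add_zero]
      have hdp : d ∣ p := EuclideanDomain.gcd_dvd_left _ _
      have hdχ : d ∣ B.charpoly := EuclideanDomain.gcd_dvd_right _ _
      obtain ⟨e, he⟩ := hdχ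
      have hirrB : Irreducible B.charpoly := by
        rwa [hB, Matrix.charpoly_map]
      rcases hirrB.isUnit_or_isUnit he with hu | hu
      · -- d is a unit, so v = 0
        obtain ⟨a, ha, haC⟩ := Polynomial.isUnit_iff.mp hu
        rw [← haC, aeval_C] at hdv
        have : (algebraMap ℚ (Matrix (Fin m) (Fin m) ℚ) a).mulVec v = a • v := by
          rw [Algebra.algebraMap_eq_smul_one, Matrix.smul_mulVec, Matrix.one_mulVec]
        have hav : a • v = 0 := by rw [← this]; exact hdv
        rcases smul_eq_zero.mp hav with h' | h'
        · exact ha.ne_zero h'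
        · exact hv0 h'
      · -- e is a unit, so d has degree m, contradicting d ∣ p
        have hdd : d.natDegree = m := by
          have h1 : B.charpoly.natDegree = d.natDegree + e.natDegree := by
            rw [he, Polynomial.natDegree_mul (fun h0 => by
              simp [h0] at he; exact B.charpoly_monic.ne_zero he) hu.ne_zero]
          rw [Polynomial.natDegree_eq_zero_of_isUnit hu] at h1
          rw [hB, Matrix.charpoly_map] at h1
          have h2 : (A.charpoly.map (Int.castRingHom ℚ)).natDegree = m := by
            rw [(A.charpoly_monic).natDegree_map, Matrix.charpoly_natDegree_eq_dim,
              Fintype.card_fin]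
          omega
        have h3 : d.natDegree ≤ p.natDegree := Polynomial.natDegree_le_of_dvd hdp hp0
        have h4 : p.natDegree < m :=
          (Polynomial.natDegree_lt_iff_degree_lt hp0).mpr hdegp
        omega
    intro i
    have := congrArg (fun q : ℚ[X] => q.coeff (i : ℕ)) hp0
    simp only [hp, Polynomial.finset_sum_coeff, Polynomial.coeff_C_mul,
      Polynomial.coeff_X_pow, Polynomial.coeff_zero] at this
    rw [Finset.sum_eq_single i (fun j _ hj => by
      rw [if_neg (by simpa [Fin.val_eq_val] using (Ne.symm hj)), mul_zero])
      (fun hi => absurd (Finset.mem_univ i) hi)] at this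
    simpa using this
  -- these vectors live in V
  have hmemV : ∀ n : ℕ, (B ^ n).mulVec v ∈ V := by
    intro n
    induction n with
    | zero => simpa [Matrix.one_mulVec] using hvV
    | succ n ih =>
        have : (B ^ (n + 1)).mulVec v = B.mulVec ((B ^ n).mulVec v) := by
          rw [Matrix.mulVec_mulVec, ← pow_succ']
        rw [this]
        exact hVB _ ih
  -- conclude V = ⊤ by dimension count
  have hw : LinearIndependent ℚ fun i : Fin m => (⟨(B ^ (i : ℕ)).mulVec v, hmemV i⟩ : V) :=
    LinearIndependent.of_comp V.subtype hindep
  have hfin : m ≤ Module.finrank ℚ V := by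
    simpa using hw.fintype_card_le_finrank
  apply Submodule.eq_top_of_finrank_eq
  have h1 : Module.finrank ℚ V ≤ Module.finrank ℚ (Fin m → ℚ) := Submodule.finrank_le V
  have h2 : Module.finrank ℚ (Fin m → ℚ) = m := by simp
  omega
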